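/- The set A = {x ∈ ℝ³₊ : x_1+x_2+x_3 ≤ 2·max(x_1,x_2,x_3)} is absorbing for T: for Lebesgue-almost every x ∈ ℝ³₊ there exists an integer k ≥ 0 such that T^k(x) ∈ A. -/

import Mathlib

open MeasureTheory Filter Topology

/-- The subtractive map on the positive octant of `ℝ³`: subtract the minimal
coordinate from the other two. -/
noncomputable def T3 (x : Fin 3 → ℝ) : Fin 3 → ℝ :=
  if x 0 ≤ x 1 ∧ x 0 ≤ x 2 then ![x 0, x 1 - x 0, x 2 - x 0]
  else if x 1 ≤ x 0 ∧ x 1 ≤ x 2 then ![x 0 - x 1, x 1, x 2 - x 1]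
  else ![x 0 - x 2, x 1 - x 2, x 2]

/-- `A = {x ∈ ℝ³₊ : x₁+x₂+x₃ ≤ 2·max(x₁,x₂,x₃)}`. -/
def A3 : Set (Fin 3 → ℝ) :=
  {x | (∀ i, 0 ≤ x i) ∧ x 0 + x 1 + x 2 ≤ 2 * max (x 0) (max (x 1) (x 2))}

namespace S6aux

noncomputable def Gfun : ℕ → ℝ → ℝ → ℝ → ℝ
  | 0, a, b, c => (a * b * c)⁻¹
  | n+1, a, b, c =>
      Gfun n a (a+b) (a+c) + Gfun n (a+b) b (b+c) + Gfun n (a+c) (b+c) c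

lemma Gfun_nonneg : ∀ (n : ℕ) {a b c : ℝ}, 0 < a → 0 < b → 0 < c → 0 ≤ Gfun n a b c
  | 0, a, b, c, ha, hb, hc => by
      simp only [Gfun]; positivity
  | n+1, a, b, c, ha, hb, hc => by
      simp only [Gfun]
      have h1 := @Gfun_nonneg n a (a+b) (a+c) ha (by linarith) (by linarith)
      have h2 := @Gfun_nonneg n (a+b) b (b+c) (by linarith) hb (by linarith)
      have h3 := @Gfun_nonneg n (a+c) (b+c) c (by linarith) (by linarith) hc
      linarith

lemma keyH {a b c m M : ℝ} (ha : 0 < a) (hb : 0 < b) (hc : 0 < c)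
    (hm : 0 ≤ m) (hma : m ≤ a) (hab : a ≤ b) (hac : a ≤ c)
    (hbM : b ≤ M) (hcM : c ≤ M) :
    m * ((a+b)*(b+c)*(c+a)) ≤ 8 * (a*b*c) * M := by
  have hM : 0 < M := lt_of_lt_of_le hb hbM
  have h4 : (a+b)*(b+c) ≤ (2*b)*(2*M) := by
    apply mul_le_mul (by linarith) (by linarith) (by linarith) (by linarith)
  have h5 : (a+b)*(b+c)*(c+a) ≤ (2*b)*(2*M)*(2*c) := by
    apply mul_le_mul h4 (by linarith) (by linarith) (by positivity)
  have h6 : m * ((a+b)*(b+c)*(c+a)) ≤ a * ((2*b)*(2*M)*(2*c)) := by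
    apply mul_le_mul hma h5 (by positivity) (by linarith)
  nlinarith [h6]

lemma key_mD {a b c : ℝ} (ha : 0 < a) (hb : 0 < b) (hc : 0 < c) :
    (min a (min b c)) * ((a+b)*(b+c)*(c+a)) ≤ 8 * (a*b*c) * (max a (max b c)) := by
  have hm0 : 0 ≤ min a (min b c) := le_min ha.le (le_min hb.le hc.le)
  have hMa : a ≤ max a (max b c) := le_max_left _ _
  have hMb : b ≤ max a (max b c) := le_max_of_le_right (le_max_left _ _)
  have hMc : c ≤ max a (max b c) := le_max_of_le_right (le_max_right _ _)
  rcases le_total a b with hab | hab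
  · rcases le_total a c with hac | hac
    · -- a smallest
      have hma : min a (min b c) ≤ a := min_le_left _ _
      nlinarith [keyH ha hb hc hm0 hma hab hac hMb hMc]
    · -- c ≤ a ≤ b : c smallest
      have hmc : min a (min b c) ≤ c := le_trans (min_le_right _ _) (min_le_right _ _)
      nlinarith [keyH hc hb ha hm0 hmc (le_trans hac hab) hac hMb hMa]
  · rcases le_total b c with hbc | hbc
    · -- b smallest
      have hmb : min a (min b c) ≤ b := le_trans (min_le_right _ _) (min_le_left _ _)
      nlinarith [keyH hb ha hc hm0 hmb hab hbc hMa hMc]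
    · -- c ≤ b ≤ a : c smallest
      have hmc : min a (min b c) ≤ c := le_trans (min_le_right _ _) (min_le_right _ _)
      nlinarith [keyH hc ha hb hm0 hmc (le_trans hbc hab) hbc hMa hMb]

/-- sum of inverses of the three children products. -/
lemma child_sum_bound {a b c : ℝ} (ha : 0 < a) (hb : 0 < b) (hc : 0 < c) :
    (a*(a+b)*(a+c))⁻¹ + ((a+b)*b*(b+c))⁻¹ + ((a+c)*(b+c)*c)⁻¹
      ≤ (a*b*c)⁻¹ * (1 - (min a (min b c)) / (4 * max a (max b c))) := by
  have hM : (0:ℝ) < max a (max b c) := lt_of_lt_of_le ha (le_max_left _ _)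
  have hm : (0:ℝ) < min a (min b c) := lt_min ha (lt_min hb hc)
  set m := min a (min b c)
  set M := max a (max b c)
  have key := key_mD ha hb hc
  have h1 : (0:ℝ) < a + b := by linarith
  have h2 : (0:ℝ) < a + c := by linarith
  have h3 : (0:ℝ) < b + c := by linarith
  have e1 : (a * (a + b) * (a + c))⁻¹ + ((a + b) * b * (b + c))⁻¹ + ((a + c) * (b + c) * c)⁻¹
      = ((a+b)*(b+c)*(c+a) - 2*(a*b*c)) / ((a*b*c) * ((a+b)*(b+c)*(c+a))) := by
    field_simp
    ring
  have e2 : (a * b * c)⁻¹ * (1 - m / (4 * M)) = (4*M - m) / ((a*b*c) * (4*M)) := by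
    field_simp
  rw [e1, e2, div_le_div_iff₀ (by positivity) (by positivity)]
  nlinarith [mul_le_mul_of_nonneg_left key (by positivity : (0:ℝ) ≤ a*b*c)]


lemma rpow_quarter {x : ℝ} (hx : 0 ≤ x) : (1+x) ^ (1/4:ℝ) ≤ 1 + x/4 := by
  have h : (1+x) ≤ (1+x/4)^(4:ℕ) := by
    have h2 := mul_nonneg hx hx
    have h3 := mul_nonneg h2 hx
    have h4 := mul_nonneg h3 hx
    ring_nf
    nlinarith [h2, h3, h4]
  calc (1+x)^(1/4:ℝ) ≤ ((1+x/4)^(4:ℕ))^(1/4:ℝ) :=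
        Real.rpow_le_rpow (by linarith) h (by norm_num)
    _ = 1 + x/4 := by
        rw [← Real.rpow_natCast (1+x/4) 4, ← Real.rpow_mul (by linarith)]
        norm_num

-- ratio bound lemma : for child with min m' and max M', with m' ≥ m, M' ≤ m' + M :
lemma ratio_bound {m M m' M' : ℝ} (n : ℕ) (hm : 0 < m) (hM : 0 < M) (hmM : m ≤ M)
    (hm' : m ≤ m') (hM' : 0 < M') (hM'le : M' ≤ m' + M) :
    M' / (M' + n * m') ≤ (M + m) / (M + (n+1) * m) := by
  have hn : (0:ℝ) ≤ n := Nat.cast_nonneg n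
  have hm'0 : 0 < m' := lt_of_lt_of_le hm hm'
  rw [div_le_div_iff₀ (by positivity) (by positivity)]
  -- M' * (M + (n+1) m) ≤ (M' + n m') (M + m)
  -- ⟺ M' * m * (n+1) - M' * m... reduce : n (M' m - m' (M+m)) ≤ (M+m) M' - M' (M+m) ... 
  have key : M' * m ≤ m' * (M + m) := by nlinarith
  nlinarith [mul_le_mul_of_nonneg_left key hn]

lemma Gfun_bound : ∀ (n : ℕ) {a b c : ℝ}, 0 < a → 0 < b → 0 < c →
    Gfun n a b c ≤ (a*b*c)⁻¹ *
      ((max a (max b c)) / (max a (max b c) + n * min a (min b c))) ^ (1/4:ℝ)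
  | 0, a, b, c, ha, hb, hc => by
      have hM : (0:ℝ) < max a (max b c) := lt_of_lt_of_le ha (le_max_left _ _)
      simp only [Gfun, Nat.cast_zero, zero_mul, add_zero, div_self (ne_of_gt hM),
        Real.one_rpow, mul_one, le_refl]
  | n+1, a, b, c, ha, hb, hc => by
      have hM : (0:ℝ) < max a (max b c) := lt_of_lt_of_le ha (le_max_left _ _)
      have hm : (0:ℝ) < min a (min b c) := lt_min ha (lt_min hb hc)
      set m := min a (min b c) with hmdef
      set M := max a (max b c) with hMdef
      have hmM : m ≤ M := le_trans (min_le_left _ _) (le_max_left _ _)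
      have hma : m ≤ a := min_le_left _ _
      have hmb : m ≤ b := le_trans (min_le_right _ _) (min_le_left _ _)
      have hmc : m ≤ c := le_trans (min_le_right _ _) (min_le_right _ _)
      have hMa : a ≤ M := le_max_left _ _
      have hMb : b ≤ M := le_max_of_le_right (le_max_left _ _)
      have hMc : c ≤ M := le_max_of_le_right (le_max_right _ _)
      -- children data
      have hab : (0:ℝ) < a + b := by linarith
      have hac : (0:ℝ) < a + c := by linarith
      have hbc : (0:ℝ) < b + c := by linarith
      -- child mins/maxes
      have hmin0 : min a (min (a+b) (a+c)) = a := by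
        rw [min_eq_left]; exact le_min (by linarith) (by linarith)
      have hmax0 : max a (max (a+b) (a+c)) = a + max b c := by
        rw [max_add_add_left, max_eq_right (by linarith [le_max_left b c] : a ≤ a + max b c)]
      have hmin1 : min (a+b) (min b (b+c)) = b := by
        rw [min_eq_left (by linarith : b ≤ b + c), min_eq_right (by linarith)]
      have hmax1 : max (a+b) (max b (b+c)) = b + max a c := by
        rw [max_eq_right (by linarith : b ≤ b + c), add_comm a b, max_add_add_left]
      have hmin2 : min (a+c) (min (b+c) c) = c := by
        rw [min_eq_right (by linarith : c ≤ b + c), min_eq_right (by linarith)]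
      have hmax2 : max (a+c) (max (b+c) c) = c + max a b := by
        rw [max_eq_left (by linarith : c ≤ b + c), add_comm a c, add_comm b c, max_add_add_left]
      -- the common ratio bound
      set ρ := (M + m) / (M + (n+1 : ℕ) * m) with hρdef
      have hρpos : 0 ≤ ρ := by positivity
      -- bound for each child
      have hch0 : Gfun n a (a+b) (a+c) ≤ (a*(a+b)*(a+c))⁻¹ * ρ ^ (1/4:ℝ) := by
        refine le_trans (Gfun_bound n ha hab hac) ?_
        apply mul_le_mul_of_nonneg_left _ (by positivity)
        apply Real.rpow_le_rpow (by positivity) _ (by norm_num)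
        rw [hmin0, hmax0, hρdef]
        push_cast
        exact ratio_bound (m' := a) (M' := a + max b c) n hm hM hmM hma
          (by positivity) (by linarith [max_le hMb hMc])
      have hch1 : Gfun n (a+b) b (b+c) ≤ ((a+b)*b*(b+c))⁻¹ * ρ ^ (1/4:ℝ) := by
        refine le_trans (Gfun_bound n hab hb hbc) ?_
        apply mul_le_mul_of_nonneg_left _ (by positivity)
        apply Real.rpow_le_rpow (by positivity) _ (by norm_num)
        rw [hmin1, hmax1, hρdef]
        push_cast
        exact ratio_bound (m' := b) (M' := b + max a c) n hm hM hmM hmb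
          (by positivity) (by linarith [max_le hMa hMc])
      have hch2 : Gfun n (a+c) (b+c) c ≤ ((a+c)*(b+c)*c)⁻¹ * ρ ^ (1/4:ℝ) := by
        refine le_trans (Gfun_bound n hac hbc hc) ?_
        apply mul_le_mul_of_nonneg_left _ (by positivity)
        apply Real.rpow_le_rpow (by positivity) _ (by norm_num)
        rw [hmin2, hmax2, hρdef]
        push_cast
        exact ratio_bound (m' := c) (M' := c + max a b) n hm hM hmM hmc
          (by positivity) (by linarith [max_le hMa hMb])
      -- combine
      have hsum : Gfun (n+1) a b c ≤
          ((a*b*c)⁻¹ * (1 - m / (4*M))) * ρ ^ (1/4:ℝ) := by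
        simp only [Gfun]
        calc Gfun n a (a+b) (a+c) + Gfun n (a+b) b (b+c) + Gfun n (a+c) (b+c) c
            ≤ ((a*(a+b)*(a+c))⁻¹ + ((a+b)*b*(b+c))⁻¹ + ((a+c)*(b+c)*c)⁻¹) * ρ ^ (1/4:ℝ) := by
              rw [add_mul, add_mul]; exact add_le_add (add_le_add hch0 hch1) hch2
          _ ≤ ((a*b*c)⁻¹ * (1 - m / (4*M))) * ρ ^ (1/4:ℝ) := by
              apply mul_le_mul_of_nonneg_right (child_sum_bound ha hb hc) (by positivity)
      refine le_trans hsum ?_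
      -- (1 - m/(4M)) * ρ^{1/4} ≤ (M/(M+(n+1)m))^{1/4}
      have hx : m / M ≤ 1 := (div_le_one hM).mpr hmM
      have hx0 : 0 < m / M := by positivity
      have hden : (0:ℝ) < M + (n+1:ℕ) * m := by positivity
      have hρeq : ρ = (M / (M + (n+1:ℕ) * m)) * (1 + m/M) := by
        rw [hρdef]; field_simp
      have hrw : ρ ^ (1/4:ℝ) = (M / (M + (n+1:ℕ) * m)) ^ (1/4:ℝ) * (1 + m/M) ^ (1/4:ℝ) := by
        rw [hρeq, Real.mul_rpow (by positivity) (by positivity)]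
      rw [hrw]
      have h14 : (1 + m/M) ^ (1/4:ℝ) ≤ 1 + (m/M)/4 := rpow_quarter hx0.le
      have hfinal : (1 - m / (4*M)) * (1 + m/M) ^ (1/4:ℝ) ≤ 1 := by
        have h1 : 0 ≤ 1 - m/(4*M) := by
          rw [sub_nonneg, div_le_one (by positivity)]; linarith
        calc (1 - m / (4*M)) * (1 + m/M) ^ (1/4:ℝ)
            ≤ (1 - m / (4*M)) * (1 + (m/M)/4) := mul_le_mul_of_nonneg_left h14 h1
          _ ≤ 1 := by
              have e : m / (4*M) = (m/M)/4 := by rw [div_div, mul_comm]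
              rw [e]
              nlinarith [sq_nonneg (m/M), hx0.le]
      calc (a*b*c)⁻¹ * (1 - m / (4*M)) *
            ((M / (M + (n+1:ℕ) * m)) ^ (1/4:ℝ) * (1 + m/M) ^ (1/4:ℝ))
          = ((1 - m / (4*M)) * (1 + m/M) ^ (1/4:ℝ)) *
            ((a*b*c)⁻¹ * (M / (M + (n+1:ℕ) * m)) ^ (1/4:ℝ)) := by ring
        _ ≤ 1 * ((a*b*c)⁻¹ * (M / (M + (n+1:ℕ) * m)) ^ (1/4:ℝ)) :=
            mul_le_mul_of_nonneg_right hfinal (by positivity)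
        _ = (a*b*c)⁻¹ * (M / (M + (n+1:ℕ) * m)) ^ (1/4:ℝ) := one_mul _


noncomputable def Bmat : Fin 3 → Matrix (Fin 3) (Fin 3) ℝ :=
  ![!![1,-1,-1; 0,1,0; 0,0,1], !![1,0,0; -1,1,-1; 0,0,1], !![1,0,0; 0,1,0; -1,-1,1]]

noncomputable def Mmap (j : Fin 3) : (Fin 3 → ℝ) →ₗ[ℝ] (Fin 3 → ℝ) :=
  Matrix.toLin' (Bmat j)

noncomputable def Umat : Matrix (Fin 3) (Fin 3) ℝ := !![-1,1,1; 1,-1,1; 1,1,-1]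

noncomputable def Umap : (Fin 3 → ℝ) →ₗ[ℝ] (Fin 3 → ℝ) := Matrix.toLin' Umat

lemma Mmap_det (j : Fin 3) : LinearMap.det (Mmap j) = 1 := by
  rw [Mmap, LinearMap.det_toLin']
  fin_cases j <;> simp [Bmat, Matrix.det_fin_three, Matrix.vecHead, Matrix.vecTail] <;> norm_num

lemma Umap_det : LinearMap.det Umap = 4 := by
  rw [Umap, LinearMap.det_toLin']
  simp [Umat, Matrix.det_fin_three, Matrix.vecHead, Matrix.vecTail]
  norm_num

lemma Mmap_apply (j : Fin 3) (u : Fin 3 → ℝ) (i : Fin 3) :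
    Mmap j u = ![![u 0 - u 1 - u 2, u 1, u 2], ![u 0, u 1 - u 0 - u 2, u 2],
      ![u 0, u 1, u 2 - u 0 - u 1]] j := by
  fin_cases j <;> funext i <;> fin_cases i <;>
    simp [Mmap, Bmat, Matrix.toLin'_apply, Matrix.mulVec, dotProduct,
      Fin.sum_univ_three, Matrix.vecHead, Matrix.vecTail] <;> ring

lemma Umap_apply (x : Fin 3 → ℝ) :
    Umap x = ![x 1 + x 2 - x 0, x 0 + x 2 - x 1, x 0 + x 1 - x 2] := by
  funext i; fin_cases i <;>
    simp [Umap, Umat, Matrix.toLin'_apply, Matrix.mulVec, dotProduct,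
      Fin.sum_univ_three, Matrix.vecHead, Matrix.vecTail] <;> ring

lemma Mmap0_apply (u : Fin 3 → ℝ) : Mmap 0 u = ![u 0 - u 1 - u 2, u 1, u 2] := by
  simpa using Mmap_apply 0 u

lemma Mmap1_apply (u : Fin 3 → ℝ) : Mmap 1 u = ![u 0, u 1 - u 0 - u 2, u 2] := by
  simpa using Mmap_apply 1 u

lemma Mmap2_apply (u : Fin 3 → ℝ) : Mmap 2 u = ![u 0, u 1, u 2 - u 0 - u 1] := by
  simpa using Mmap_apply 2 u

/-- survivor sets of the backward Arnoux–Rauzy dynamics. -/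
def Wset : ℕ → Set (Fin 3 → ℝ)
  | 0 => {u | ∀ i, 0 < u i}
  | n+1 => ⋃ j : Fin 3, (Mmap j) ⁻¹' (Wset n)

lemma Wset_volume : ∀ (n : ℕ) {a b c R : ℝ}, 0 < a → 0 < b → 0 < c → 0 ≤ R →
    volume (Wset n ∩ {u | a * u 0 + b * u 1 + c * u 2 ≤ R})
      ≤ ENNReal.ofReal (R^3 * Gfun n a b c)
  | 0, a, b, c, R, ha, hb, hc, hR => by
      have hsub : Wset 0 ∩ {u | a * u 0 + b * u 1 + c * u 2 ≤ R} ⊆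
          Set.pi Set.univ (fun i => Set.Icc (0:ℝ) (R / ![a,b,c] i)) := by
        rintro u ⟨hu, hS⟩
        intro i _
        have h0 : ∀ j, 0 < u j := hu
        have hS' : a * u 0 + b * u 1 + c * u 2 ≤ R := hS
        have key : ∀ j : Fin 3, ![a,b,c] j * u j ≤ R := by
          intro j
          fin_cases j <;> simp <;>
            nlinarith [mul_pos ha (h0 0), mul_pos hb (h0 1), mul_pos hc (h0 2), hS']
        have hσ : (0:ℝ) < ![a,b,c] i := by fin_cases i <;> simp <;> assumption
        exact ⟨(h0 i).le, by rw [le_div_iff₀ hσ]; linarith [key i, mul_comm (u i) (![a,b,c] i)]⟩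
      refine le_trans (measure_mono hsub) ?_
      rw [volume_pi_pi]
      simp only [Real.volume_Icc, sub_zero]
      rw [Fin.prod_univ_three]
      simp only [Matrix.cons_val_zero, Matrix.cons_val_one, Matrix.head_cons,
        Matrix.cons_val_two, Matrix.tail_cons]
      rw [← ENNReal.ofReal_mul (by positivity), ← ENNReal.ofReal_mul (by positivity)]
      apply le_of_eq
      congr 1
      simp only [Gfun]
      field_simp
  | n+1, a, b, c, R, ha, hb, hc, hR => by
      have hab : (0:ℝ) < a + b := by linarith
      have hac : (0:ℝ) < a + c := by linarith
      have hbc : (0:ℝ) < b + c := by linarith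
      have hW : Wset (n+1) ∩ {u | a * u 0 + b * u 1 + c * u 2 ≤ R} =
          ⋃ j : Fin 3, ((Mmap j) ⁻¹' (Wset n) ∩ {u | a * u 0 + b * u 1 + c * u 2 ≤ R}) := by
        simp only [Wset, Set.iUnion_inter]
      have branch : ∀ (j : Fin 3) (a' b' c' : ℝ), 0 < a' → 0 < b' → 0 < c' →
          (∀ u : Fin 3 → ℝ, a' * (Mmap j u) 0 + b' * (Mmap j u) 1 + c' * (Mmap j u) 2
            = a * u 0 + b * u 1 + c * u 2) →
          volume ((Mmap j) ⁻¹' (Wset n) ∩ {u | a * u 0 + b * u 1 + c * u 2 ≤ R})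
            ≤ ENNReal.ofReal (R^3 * Gfun n a' b' c') := by
        intro j a' b' c' ha' hb' hc' hcoef
        have hsub : (Mmap j) ⁻¹' (Wset n) ∩ {u | a * u 0 + b * u 1 + c * u 2 ≤ R} ⊆
            (Mmap j) ⁻¹' (Wset n ∩ {u | a' * u 0 + b' * u 1 + c' * u 2 ≤ R}) := by
          rintro u ⟨hu, hS⟩
          have hS' : a * u 0 + b * u 1 + c * u 2 ≤ R := hS
          exact ⟨hu, by rw [Set.mem_setOf_eq, hcoef u]; exact hS'⟩
        refine le_trans (measure_mono hsub) ?_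
        rw [Measure.addHaar_preimage_linearMap volume (by rw [Mmap_det]; norm_num), Mmap_det]
        simpa using Wset_volume n ha' hb' hc' hR
      have h0 := branch 0 a (a+b) (a+c) ha hab hac
        (by intro u; rw [Mmap0_apply]; simp; ring)
      have h1 := branch 1 (a+b) b (b+c) hab hb hbc
        (by intro u; rw [Mmap1_apply]; simp; ring)
      have h2 := branch 2 (a+c) (b+c) c hac hbc hc
        (by intro u; rw [Mmap2_apply]; simp; ring)
      rw [hW]
      refine le_trans (measure_iUnion_le _) ?_
      rw [tsum_fintype, Fin.sum_univ_three]
      have e : ENNReal.ofReal (R^3 * Gfun n a (a+b) (a+c))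
          + ENNReal.ofReal (R^3 * Gfun n (a+b) b (b+c))
          + ENNReal.ofReal (R^3 * Gfun n (a+c) (b+c) c)
          = ENNReal.ofReal (R^3 * Gfun (n+1) a b c) := by
        have g1 : 0 ≤ R^3 * Gfun n a (a+b) (a+c) :=
          mul_nonneg (by positivity) (Gfun_nonneg n ha hab hac)
        have g2 : 0 ≤ R^3 * Gfun n (a+b) b (b+c) :=
          mul_nonneg (by positivity) (Gfun_nonneg n hab hb hbc)
        have g3 : 0 ≤ R^3 * Gfun n (a+c) (b+c) c :=
          mul_nonneg (by positivity) (Gfun_nonneg n hac hbc hc)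
        rw [← ENNReal.ofReal_add g1 g2, ← ENNReal.ofReal_add (by linarith) g3]
        congr 1
        simp only [Gfun]; ring
      rw [← e]
      exact add_le_add (add_le_add (h0) (h1)) (h2)

/-- `T3` preserves the nonnegative octant. -/
lemma T3_nonneg {x : Fin 3 → ℝ} (hx : ∀ i, 0 ≤ x i) : ∀ i, 0 ≤ T3 x i := by
  have h0 := hx 0; have h1 := hx 1; have h2 := hx 2
  intro i
  rw [T3]
  split_ifs with hA hB
  · fin_cases i <;> simp <;> linarith [hA.1, hA.2]
  · fin_cases i <;> simp <;> linarith [hB.1, hB.2]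
  · push_neg at hA hB
    have hc : x 2 ≤ x 0 ∧ x 2 ≤ x 1 := by
      rcases le_or_gt (x 0) (x 1) with h | h
      · have := hA h; constructor <;> linarith
      · have := hB h.le; constructor <;> linarith
    fin_cases i <;> simp <;> linarith [hc.1, hc.2]

/-- If `x ≥ 0` and `x ∉ A3` then `U x` is strictly positive. -/
lemma Umap_pos {x : Fin 3 → ℝ} (hx : ∀ i, 0 ≤ x i) (hA : x ∉ A3) :
    ∀ i, 0 < Umap x i := by
  have hs : 2 * max (x 0) (max (x 1) (x 2)) < x 0 + x 1 + x 2 := by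
    by_contra h
    exact hA ⟨hx, by linarith⟩
  have m0 : x 0 ≤ max (x 0) (max (x 1) (x 2)) := le_max_left _ _
  have m1 : x 1 ≤ max (x 0) (max (x 1) (x 2)) := le_max_of_le_right (le_max_left _ _)
  have m2 : x 2 ≤ max (x 0) (max (x 1) (x 2)) := le_max_of_le_right (le_max_right _ _)
  intro i
  rw [Umap_apply]
  fin_cases i <;> simp <;> linarith

/-- branch compatibility : the `u`-coordinates evolve by one of the `Mmap`s. -/
lemma branch_exists (x : Fin 3 → ℝ) : ∃ j : Fin 3, Mmap j (Umap x) = Umap (T3 x) := by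
  rw [T3]
  split_ifs with hA hB
  · exact ⟨0, by
      rw [Mmap0_apply, Umap_apply, Umap_apply]
      funext i; fin_cases i <;> simp <;> ring⟩
  · exact ⟨1, by
      rw [Mmap1_apply, Umap_apply, Umap_apply]
      funext i; fin_cases i <;> simp <;> ring⟩
  · exact ⟨2, by
      rw [Mmap2_apply, Umap_apply, Umap_apply]
      funext i; fin_cases i <;> simp <;> ring⟩

/-- main inclusion : `n`-step survivors map into `Wset n`. -/
lemma survivor_mem : ∀ (n : ℕ) (x : Fin 3 → ℝ), (∀ i, 0 ≤ x i) →
    (∀ k, k ≤ n → T3^[k] x ∉ A3) → Umap x ∈ Wset n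
  | 0, x, hx, hk => by
      have := Umap_pos hx (by simpa using hk 0 (le_refl 0))
      exact this
  | n+1, x, hx, hk => by
      have hTx : ∀ i, 0 ≤ T3 x i := T3_nonneg hx
      have hTk : ∀ k, k ≤ n → T3^[k] (T3 x) ∉ A3 := by
        intro k hk'
        rw [← Function.iterate_succ_apply]
        exact hk (k+1) (by omega)
      have hmem := survivor_mem n (T3 x) hTx hTk
      obtain ⟨j, hj⟩ := branch_exists x
      exact Set.mem_iUnion.mpr ⟨j, by rw [Set.mem_preimage, hj]; exact hmem⟩

def Bad : Set (Fin 3 → ℝ) := {x | (∀ i, 0 ≤ x i) ∧ ∀ k : ℕ, T3^[k] x ∉ A3}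

lemma Gfun_one (n : ℕ) : Gfun n 1 1 1 ≤ ((1:ℝ)/((n:ℝ)+1)) ^ (1/4:ℝ) := by
  have h := Gfun_bound n one_pos one_pos one_pos
  simp only [max_self, min_self, mul_one, one_mul, inv_one] at h
  calc Gfun n 1 1 1 ≤ (1 / (1 + (n:ℝ))) ^ (1/4:ℝ) := by
        have : (1:ℝ) + (n:ℝ) * 1 = 1 + (n:ℝ) := by ring
        simpa [this] using h
    _ = ((1:ℝ)/((n:ℝ)+1)) ^ (1/4:ℝ) := by rw [add_comm]

lemma Bad_inter_null (R : ℝ) (hR : 0 ≤ R) :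
    volume (Bad ∩ {x | x 0 + x 1 + x 2 ≤ R}) = 0 := by
  have key : ∀ n : ℕ, volume (Bad ∩ {x | x 0 + x 1 + x 2 ≤ R}) ≤
      ENNReal.ofReal ((4:ℝ)⁻¹ * (R^3 * ((1:ℝ)/((n:ℝ)+1)) ^ (1/4:ℝ))) := by
    intro n
    have hsub : Bad ∩ {x | x 0 + x 1 + x 2 ≤ R} ⊆
        Umap ⁻¹' (Wset n ∩ {u | 1 * u 0 + 1 * u 1 + 1 * u 2 ≤ R}) := by
      rintro x ⟨⟨hx, hk⟩, hs⟩
      refine ⟨survivor_mem n x hx (fun k _ => hk k), ?_⟩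
      have hs' : x 0 + x 1 + x 2 ≤ R := hs
      rw [Set.mem_setOf_eq, Umap_apply]
      simp only [Matrix.cons_val_zero, Matrix.cons_val_one, Matrix.head_cons,
        Matrix.cons_val_two, Matrix.tail_cons]
      linarith
    refine le_trans (measure_mono hsub) ?_
    rw [Measure.addHaar_preimage_linearMap volume (by rw [Umap_det]; norm_num), Umap_det]
    have h1 := Wset_volume n one_pos one_pos one_pos hR
    have h2 : R^3 * Gfun n 1 1 1 ≤ R^3 * ((1:ℝ)/((n:ℝ)+1)) ^ (1/4:ℝ) :=
      mul_le_mul_of_nonneg_left (Gfun_one n) (by positivity)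
    calc ENNReal.ofReal |((4:ℝ))⁻¹| * volume (Wset n ∩ {u | 1*u 0 + 1*u 1 + 1*u 2 ≤ R})
        ≤ ENNReal.ofReal |((4:ℝ))⁻¹| * ENNReal.ofReal (R^3 * Gfun n 1 1 1) := by
          exact mul_le_mul_right h1 _
      _ ≤ ENNReal.ofReal |((4:ℝ))⁻¹| * ENNReal.ofReal (R^3 * ((1:ℝ)/((n:ℝ)+1)) ^ (1/4:ℝ)) := by
          exact mul_le_mul_right (ENNReal.ofReal_le_ofReal h2) _
      _ = ENNReal.ofReal ((4:ℝ)⁻¹ * (R^3 * ((1:ℝ)/((n:ℝ)+1)) ^ (1/4:ℝ))) := by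
          rw [← ENNReal.ofReal_mul (by positivity),
            abs_of_pos (by norm_num : (0:ℝ) < (4:ℝ)⁻¹)]
  have hlim : Tendsto (fun n : ℕ =>
      ENNReal.ofReal ((4:ℝ)⁻¹ * (R^3 * ((1:ℝ)/((n:ℝ)+1)) ^ (1/4:ℝ)))) atTop (𝓝 0) := by
    have h0 : Tendsto (fun n : ℕ => ((1:ℝ)/((n:ℝ)+1)) ^ (1/4:ℝ)) atTop (𝓝 0) := by
      have := (tendsto_one_div_add_atTop_nhds_zero_nat).rpow_const
        (Or.inr (by norm_num : (0:ℝ) ≤ 1/4))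
      simpa [Real.zero_rpow (by norm_num : (1/4:ℝ) ≠ 0)] using this
    have h1 : Tendsto (fun n : ℕ => (4:ℝ)⁻¹ * (R^3 * ((1:ℝ)/((n:ℝ)+1)) ^ (1/4:ℝ)))
        atTop (𝓝 0) := by
      have := (h0.const_mul (R^3)).const_mul ((4:ℝ)⁻¹)
      simpa using this
    have := ENNReal.tendsto_ofReal h1
    simpa using this
  have := ge_of_tendsto' hlim key
  simpa using le_zero_iff.mp this

lemma Bad_null : volume Bad = 0 := by
  have hsub : Bad ⊆ ⋃ R : ℕ, (Bad ∩ {x | x 0 + x 1 + x 2 ≤ (R:ℝ)}) := by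
    intro x hx
    obtain ⟨R, hR⟩ := exists_nat_ge (x 0 + x 1 + x 2)
    exact Set.mem_iUnion.mpr ⟨R, hx, hR⟩
  refine measure_mono_null hsub (measure_iUnion_null fun R => Bad_inter_null R (Nat.cast_nonneg R))


end S6aux

/-- `A` is absorbing for `T`: for a.e. `x ∈ ℝ³₊` some iterate of
`T` sends `x` into `A`. -/
theorem statement6 :
    ∀ᵐ x : Fin 3 → ℝ, (∀ i, 0 ≤ x i) → ∃ k : ℕ, T3^[k] x ∈ A3 := by
  rw [MeasureTheory.ae_iff]
  refine measure_mono_null ?_ S6aux.Bad_null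
  intro x hx
  rw [Set.mem_setOf_eq] at hx
  obtain ⟨h1, h2⟩ := _root_.not_imp.mp hx
  exact ⟨h1, not_exists.mp h2⟩
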